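/- Let P be an n×n automaton matrix such that some power of P has a positive column (equivalently, P is SIA). Then P^{n-1} has a positive column. -/

import Mathlib

open Matrix Finset
open scoped Classical

def Stochastic {n : ℕ} (P : Matrix (Fin n) (Fin n) ℝ) : Prop :=
  (∀ i j, 0 ≤ P i j) ∧ ∀ i, ∑ j, P i j = 1

def PosColumn {n : ℕ} (M : Matrix (Fin n) (Fin n) ℝ) : Prop :=
  ∃ j, ∀ i, 0 < M i j

def IsSIA {n : ℕ} (P : Matrix (Fin n) (Fin n) ℝ) : Prop :=
  ∃ p : ℕ, 0 < p ∧ PosColumn (P ^ p)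

def Scrambling {n : ℕ} (M : Matrix (Fin n) (Fin n) ℝ) : Prop :=
  ∀ i i', ∃ k, 0 < M i k ∧ 0 < M i' k

noncomputable def conseq {n : ℕ} (M : Matrix (Fin n) (Fin n) ℝ) (S : Finset (Fin n)) :
    Finset (Fin n) :=
  Finset.univ.filter (fun j => ∃ i ∈ S, 0 < M i j)

def Sarymsakov {n : ℕ} (M : Matrix (Fin n) (Fin n) ℝ) : Prop :=
  ∀ S S' : Finset (Fin n), S.Nonempty → S'.Nonempty → Disjoint S S' →
    (conseq M S ∩ conseq M S').Nonempty ∨ (S ∪ S').card < (conseq M S ∪ conseq M S').card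

def AutomatonMatrix {n : ℕ} (P : Matrix (Fin n) (Fin n) ℝ) : Prop :=
  (∀ i j, P i j = 0 ∨ P i j = 1) ∧ ∀ i, ∃! j, P i j = 1


lemma aux_const {n : ℕ} (f : Fin n → Fin n) (p : ℕ) (c : Fin n)
    (h : ∀ i, f^[p] i = c) : ∃ d, ∀ i, f^[n-1] i = d := by
  have hn : 0 < n := c.pos
  set T : ℕ → Finset (Fin n) := fun k => Finset.univ.image (f^[k]) with hT
  have : Nonempty (Fin n) := ⟨c⟩
  have hTne : ∀ k, (T k).Nonempty := fun k =>
    (Finset.univ_nonempty (α := Fin n)).image _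
  have hTsucc : ∀ k, T (k+1) = (T k).image f := by
    intro k
    simp only [hT]
    rw [Function.iterate_succ', Finset.image_image]
  have hTsub : ∀ k, T (k+1) ⊆ T k := by
    intro k j hj
    simp only [hT, Finset.mem_image] at hj ⊢
    obtain ⟨i, -, hi⟩ := hj
    exact ⟨f i, Finset.mem_univ _, by rw [← hi, ← Function.iterate_succ_apply]⟩
  have hTmono : ∀ a b : ℕ, a ≤ b → T b ⊆ T a := by
    intro a b hab
    induction b with
    | zero => simp_all
    | succ b ih =>
      rcases Nat.lt_or_ge a (b+1) with h1 | h1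
      · exact (hTsub b).trans (ih (Nat.lt_succ_iff.mp h1))
      · have : a = b + 1 := le_antisymm hab h1
        subst this; exact subset_rfl
  have hTp : T p ⊆ {c} := by
    intro x hx
    simp only [hT, Finset.mem_image] at hx
    obtain ⟨i, -, hi⟩ := hx
    simp [← hi, h i]
  have stable : ∀ k, (T (k+1)).card = (T k).card →
      ∀ m, k ≤ m → (T m).card = (T k).card := by
    intro k hk
    have hinj : Set.InjOn f (T k) := by
      rw [← Finset.card_image_iff, ← hTsucc]; exact hk
    intro m hm
    induction m with
    | zero => simp [Nat.le_zero.mp hm]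
    | succ m ih =>
      rcases Nat.lt_or_ge k (m+1) with h1 | h1
      · have hm' : k ≤ m := Nat.lt_succ_iff.mp h1
        rw [hTsucc,
          Finset.card_image_of_injOn (hinj.mono (Finset.coe_subset.mpr (hTmono k m hm'))),
          ih hm']
      · have : k = m + 1 := le_antisymm hm h1
        rw [← this]
  have hcard : (T (n-1)).card = 1 := by
    by_contra hne
    have h2 : 2 ≤ (T (n-1)).card := by
      have := Finset.card_pos.mpr (hTne (n-1))
      omega
    have key : ∀ d, d ≤ n - 1 → d + 2 ≤ (T (n-1-d)).card := by
      intro d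
      induction d with
      | zero => simpa using h2
      | succ d ih =>
        intro hd
        have hd' : d ≤ n - 1 := by omega
        have ih' := ih hd'
        set j := n - 1 - (d+1) with hj
        have hj1 : j + 1 = n - 1 - d := by omega
        have hjle : j ≤ n - 1 := by omega
        have h2j : 2 ≤ (T j).card := le_trans h2
          (Finset.card_le_card (hTmono j (n-1) hjle))
        have hlt : (T (j+1)).card < (T j).card := by
          rcases lt_or_eq_of_le (Finset.card_le_card (hTsub j)) with h1 | h1
          · exact h1
          · exfalso
            have hmax : (T (max p j)).card = (T j).card :=
              stable j h1 _ (le_max_right _ _)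
            have hsub : T (max p j) ⊆ {c} :=
              (hTmono p (max p j) (le_max_left _ _)).trans hTp
            have := Finset.card_le_card hsub
            simp only [Finset.card_singleton] at this
            omega
        rw [hj1] at hlt
        omega
    have := key (n-1) le_rfl
    have hle : (T 0).card ≤ n := by
      simpa using (Finset.card_le_univ (T 0)).trans_eq (by simp)
    simp only [Nat.sub_self] at this
    omega
  obtain ⟨d, hd⟩ := Finset.card_eq_one.mp hcard
  refine ⟨d, fun i => ?_⟩
  have : f^[n-1] i ∈ T (n-1) := Finset.mem_image.mpr ⟨i, Finset.mem_univ _, rfl⟩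
  rw [hd] at this
  simpa using this

theorem stmt6 {n : ℕ} (P : Matrix (Fin n) (Fin n) ℝ) (hP : AutomatonMatrix P)
    (hSIA : IsSIA P) :
    PosColumn (P ^ (n - 1)) := by
  obtain ⟨h01, huniq⟩ := hP
  choose f hf1 hf2 using huniq
  have hent : ∀ i j, P i j = if f i = j then 1 else 0 := by
    intro i j
    by_cases h : f i = j
    · subst h; simp [hf1 i]
    · rcases h01 i j with h0 | h1
      · simp [h, h0]
      · exact absurd (hf2 i j h1).symm h
  have hpow : ∀ k i j, (P ^ k) i j = if f^[k] i = j then 1 else 0 := by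
    intro k
    induction k with
    | zero => intro i j; simp [Matrix.one_apply, eq_comm]; congr
    | succ k ih =>
      intro i j
      rw [pow_succ, Matrix.mul_apply]
      have : ∀ l, (P ^ k) i l * P l j
          = if f^[k] i = l then (if f l = j then (1:ℝ) else 0) else 0 := by
        intro l
        rw [ih, hent]
        by_cases h : f^[k] i = l <;> simp [h]
      simp only [this, Finset.sum_ite_eq, Finset.mem_univ, if_true,
        Function.iterate_succ_apply']
  obtain ⟨p, hp, c, hcol⟩ := hSIA
  have hconst : ∀ i, f^[p] i = c := by
    intro i
    have := hcol i
    rw [hpow] at this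
    by_contra h
    simp [h] at this
  obtain ⟨d, hd⟩ := aux_const f p c hconst
  exact ⟨d, fun i => by rw [hpow, if_pos (hd i)]; norm_num⟩
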